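/- Define the operator Δ on functions f : ℝ → ℝ by (Δf)(x) = f(x) − (1/2) f(x+1) − (1/2) f(x−1), and let h : ℝ → ℝ be h(s) = (1/2)(|s| − 1) for |s| ≤ 1 and h(s) = 0 otherwise. Then for every integer n ≥ 1 and every f : ℝ → ℝ of class C^{2n}, (Δⁿ f)(x) = ∫_ℝ h^{*n}(s) · f^{(2n)}(x − s) ds for all x ∈ ℝ, where h^{*n} denotes the n-fold convolution power of h (supported in [−n, n]). In particular, for n = 1, (Δf)(x) = ∫_ℝ h(s) f''(x − s) ds. -/

import Mathlib

open MeasureTheory Real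

/-- The discrete second-difference operator `(Δf)(x) = f(x) − (1/2) f(x+1) − (1/2) f(x−1)`. -/
noncomputable def deltaOp (f : ℝ → ℝ) : ℝ → ℝ :=
  fun x => f x - (1 / 2) * f (x + 1) - (1 / 2) * f (x - 1)

/-- The tent-like profile `h(s) = (1/2)(|s| − 1)` for `|s| ≤ 1`, and `0` otherwise. -/
noncomputable def hTent (s : ℝ) : ℝ :=
  if |s| ≤ 1 then (1 / 2) * (|s| - 1) else 0

/-- `hStar n` is the `(n+1)`-fold convolution power `h^{*(n+1)}` of `hTent`. -/
noncomputable def hStar : ℕ → ℝ → ℝ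
  | 0 => hTent
  | n + 1 => fun x => ∫ y : ℝ, hTent y * hStar n (x - y)

lemma hTent_eq_min : hTent = fun s => min ((1 / 2) * (|s| - 1)) 0 := by
  funext s
  unfold hTent
  split_ifs with h
  · rw [min_eq_left]; nlinarith [abs_nonneg s]
  · rw [min_eq_right]; push_neg at h; nlinarith

lemma continuous_hTent : Continuous hTent := by
  rw [hTent_eq_min]
  exact ((continuous_const.mul (continuous_abs.sub continuous_const)).min continuous_const)

lemma hTent_eq_zero {s : ℝ} (h : ¬ |s| ≤ 1) : hTent s = 0 := if_neg h

lemma hasCompactSupport_hTent : HasCompactSupport hTent := by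
  apply HasCompactSupport.intro (isCompact_Icc (a := (-1:ℝ)) (b := 1))
  intro s hs
  apply hTent_eq_zero
  simp only [Set.mem_Icc, not_and_or, not_le] at hs
  rw [abs_le]; push_neg; rcases hs with h | h
  · intro h'; linarith
  · intro h'; linarith

open scoped Convolution in
lemma hStar_cont_supp : ∀ n, Continuous (hStar n) ∧ HasCompactSupport (hStar n)
  | 0 => ⟨continuous_hTent, hasCompactSupport_hTent⟩
  | n + 1 => by
    obtain ⟨hc, hs⟩ := hStar_cont_supp n
    have heq : hStar (n + 1) = hTent ⋆[ContinuousLinearMap.mul ℝ ℝ, volume] hStar n := by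
      funext x
      simp [hStar, convolution_def]
    constructor
    · rw [heq]
      exact HasCompactSupport.continuous_convolution_right (L := ContinuousLinearMap.mul ℝ ℝ) hs (continuous_hTent.locallyIntegrable) hc
    · rw [heq]
      exact hasCompactSupport_hTent.convolution (L := ContinuousLinearMap.mul ℝ ℝ) hs

lemma continuous_hStar (n : ℕ) : Continuous (hStar n) := (hStar_cont_supp n).1
lemma hasCompactSupport_hStar (n : ℕ) : HasCompactSupport (hStar n) := (hStar_cont_supp n).2

lemma deriv_deriv_eq (f : ℝ → ℝ) : deriv (deriv f) = iteratedDeriv 2 f := by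
  rw [iteratedDeriv_succ, iteratedDeriv_one]

lemma base_case (f : ℝ → ℝ) (hf : ContDiff ℝ 2 f) (x : ℝ) :
    deltaOp f x = ∫ s : ℝ, hTent s * iteratedDeriv 2 f (x - s) := by
  have hF2 : Continuous (iteratedDeriv 2 f) := hf.continuous_iteratedDeriv 2 (by norm_num)
  have hd1 : Differentiable ℝ f := hf.differentiable (by norm_num)
  have hcd1 : ContDiff ℝ 1 (deriv f) := by
    have := (contDiff_succ_iff_deriv.mp (show ContDiff ℝ (1 + 1) f by exact_mod_cast hf)).2.2
    exact_mod_cast this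
  have hd2 : Differentiable ℝ (deriv f) := hcd1.differentiable (by norm_num)
  have hder2 : ∀ z : ℝ, HasDerivAt (deriv f) (iteratedDeriv 2 f z) z := by
    intro z
    rw [← deriv_deriv_eq]
    exact (hd2 z).hasDerivAt
  have hid : ∀ s : ℝ, HasDerivAt (fun t : ℝ => x - t) (-1) s := fun s =>
    (hasDerivAt_id s).const_sub x
  have hA : ∀ s : ℝ, HasDerivAt (fun t => f (x - t)) (deriv f (x - s) * (-1)) s := fun s =>
    HasDerivAt.comp s (hd1 (x - s)).hasDerivAt (hid s)
  have hB : ∀ s : ℝ, HasDerivAt (fun t => deriv f (x - t)) (iteratedDeriv 2 f (x - s) * (-1)) s :=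
    fun s => HasDerivAt.comp s (hder2 (x - s)) (hid s)
  have hφ : ∀ s : ℝ, HasDerivAt
      (fun t => -(1/2) * (t - 1) * deriv f (x - t) - (1/2) * f (x - t))
      ((1/2) * (s - 1) * iteratedDeriv 2 f (x - s)) s := by
    intro s
    have h1 : HasDerivAt (fun t : ℝ => -(1/2) * (t - 1)) (-(1/2)) s := by
      simpa using (((hasDerivAt_id s).sub_const 1).const_mul (-(1/2) : ℝ))
    have := (h1.mul (hB s)).sub ((hA s).const_mul (1/2 : ℝ))
    exact this.congr_deriv (by ring)
  have hψ : ∀ s : ℝ, HasDerivAt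
      (fun t => (1/2) * (t + 1) * deriv f (x - t) + (1/2) * f (x - t))
      ((1/2) * (-s - 1) * iteratedDeriv 2 f (x - s)) s := by
    intro s
    have h1 : HasDerivAt (fun t : ℝ => (1/2) * (t + 1)) (1/2) s := by
      simpa using (((hasDerivAt_id s).add_const 1).const_mul ((1/2) : ℝ))
    have := (h1.mul (hB s)).add ((hA s).const_mul (1/2 : ℝ))
    exact this.congr_deriv (by ring)
  have hcont : Continuous (fun s => hTent s * iteratedDeriv 2 f (x - s)) :=
    continuous_hTent.mul (hF2.comp (continuous_const.sub continuous_id))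
  have hIoc : (∫ s : ℝ, hTent s * iteratedDeriv 2 f (x - s)) =
      ∫ s in Set.Ioc (-1 : ℝ) 1, hTent s * iteratedDeriv 2 f (x - s) := by
    rw [← integral_indicator measurableSet_Ioc]
    congr 1
    funext s
    by_cases hs : s ∈ Set.Ioc (-1 : ℝ) 1
    · rw [Set.indicator_of_mem hs]
    · rw [Set.indicator_of_notMem hs]
      have hz : hTent s = 0 := by
        unfold hTent
        split_ifs with h
        · rw [abs_le] at h
          simp only [Set.mem_Ioc, not_and_or, not_lt, not_le] at hs
          have hs1 : s = -1 := by rcases hs with h' | h' <;> linarith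
          rw [hs1]; norm_num
        · rfl
      rw [hz, zero_mul]
  have h02 : (∫ s in Set.Ioc (-1 : ℝ) 1, hTent s * iteratedDeriv 2 f (x - s)) =
      ∫ s in (-1 : ℝ)..1, hTent s * iteratedDeriv 2 f (x - s) := by
    rw [intervalIntegral.integral_of_le (by norm_num : (-1:ℝ) ≤ 1)]
  have hsplit : (∫ s in (-1 : ℝ)..1, hTent s * iteratedDeriv 2 f (x - s)) =
      (∫ s in (-1 : ℝ)..0, hTent s * iteratedDeriv 2 f (x - s)) +
      ∫ s in (0 : ℝ)..1, hTent s * iteratedDeriv 2 f (x - s) := by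
    rw [intervalIntegral.integral_add_adjacent_intervals] <;>
      exact hcont.intervalIntegrable _ _
  have hleft : (∫ s in (-1 : ℝ)..0, hTent s * iteratedDeriv 2 f (x - s)) =
      (1/2) * deriv f x + (1/2) * f x - (1/2) * f (x + 1) := by
    have hcongr : (∫ s in (-1 : ℝ)..0, hTent s * iteratedDeriv 2 f (x - s)) =
        ∫ s in (-1 : ℝ)..0, (1/2) * (-s - 1) * iteratedDeriv 2 f (x - s) := by
      apply intervalIntegral.integral_congr
      intro s hs
      rw [Set.uIcc_of_le (by norm_num : (-1:ℝ) ≤ 0), Set.mem_Icc] at hs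
      have habs : |s| = -s := abs_of_nonpos hs.2
      simp only [hTent, habs]
      rw [if_pos (by linarith : -s ≤ (1:ℝ))]
    rw [hcongr, intervalIntegral.integral_eq_sub_of_hasDerivAt (fun s _ => hψ s)
      (((continuous_const.mul ((continuous_neg.sub continuous_const))).mul
        (hF2.comp (continuous_const.sub continuous_id))).intervalIntegrable _ _)]
    norm_num
  have hright : (∫ s in (0 : ℝ)..1, hTent s * iteratedDeriv 2 f (x - s)) =
      -(1/2) * f (x - 1) + (1/2) * f x - (1/2) * deriv f x := by
    have hcongr : (∫ s in (0 : ℝ)..1, hTent s * iteratedDeriv 2 f (x - s)) =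
        ∫ s in (0 : ℝ)..1, (1/2) * (s - 1) * iteratedDeriv 2 f (x - s) := by
      apply intervalIntegral.integral_congr
      intro s hs
      rw [Set.uIcc_of_le (by norm_num : (0:ℝ) ≤ 1), Set.mem_Icc] at hs
      have habs : |s| = s := abs_of_nonneg hs.1
      simp only [hTent, habs]
      rw [if_pos hs.2]
    rw [hcongr, intervalIntegral.integral_eq_sub_of_hasDerivAt (fun s _ => hφ s)
      (((continuous_const.mul ((continuous_id.sub continuous_const))).mul
        (hF2.comp (continuous_const.sub continuous_id))).intervalIntegrable _ _)]
    norm_num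
    ring
  rw [hIoc, h02, hsplit, hleft, hright]
  unfold deltaOp
  ring

lemma swap_aux (Φ : ℝ → ℝ → ℝ) (hc : Continuous (Function.uncurry Φ))
    (K L : Set ℝ) (hK : IsCompact K) (hL : IsCompact L)
    (hz : ∀ s t, Φ s t ≠ 0 → s ∈ K ∧ t ∈ L) :
    ∫ s : ℝ, ∫ t : ℝ, Φ s t = ∫ t : ℝ, ∫ s : ℝ, Φ s t := by
  apply integral_integral_swap
  have hsupp : HasCompactSupport (Function.uncurry Φ) := by
    apply HasCompactSupport.intro (hK.prod hL)
    intro p hp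
    by_contra h
    obtain ⟨h1, h2⟩ := hz p.1 p.2 h
    exact hp ⟨h1, h2⟩
  have h2 : Integrable (Function.uncurry Φ) (volume : Measure (ℝ × ℝ)) :=
    hc.integrable_of_hasCompactSupport hsupp
  rwa [MeasureTheory.Measure.volume_eq_prod] at h2

open scoped Pointwise in
lemma conv_step (F : ℝ → ℝ) (hF : Continuous F) (n : ℕ) (x : ℝ) :
    ∫ s : ℝ, hStar n s * ∫ t : ℝ, hTent t * F (x - s - t) =
    ∫ u : ℝ, hStar (n + 1) u * F (x - u) := by
  have hA := continuous_hStar n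
  have hAs := hasCompactSupport_hStar n
  -- LHS to common form
  have lhs_eq : (∫ s : ℝ, hStar n s * ∫ t : ℝ, hTent t * F (x - s - t)) =
      ∫ t : ℝ, hTent t * ∫ s : ℝ, hStar n s * F (x - s - t) := by
    have e1 : ∀ s : ℝ, hStar n s * ∫ t : ℝ, hTent t * F (x - s - t) =
        ∫ t : ℝ, hStar n s * (hTent t * F (x - s - t)) := by
      intro s; rw [MeasureTheory.integral_const_mul]
    simp_rw [e1]
    rw [swap_aux (fun s t => hStar n s * (hTent t * F (x - s - t)))
      (((continuous_hStar n).comp continuous_fst).mul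
        ((continuous_hTent.comp continuous_snd).mul
          (hF.comp (by continuity)))) (tsupport (hStar n)) (tsupport hTent) hAs hasCompactSupport_hTent ?_]
    · congr 1; funext t
      have : ∀ s : ℝ, hStar n s * (hTent t * F (x - s - t)) =
          hTent t * (hStar n s * F (x - s - t)) := fun s => by ring
      simp_rw [this]
      rw [MeasureTheory.integral_const_mul]
    · intro s t h
      constructor
      · exact subset_closure (fun h' => h (by simp [h']))
      · exact subset_closure (fun h' => h (by simp [h']))
  -- RHS to common form
  have rhs_eq : (∫ u : ℝ, hStar (n + 1) u * F (x - u)) =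
      ∫ t : ℝ, hTent t * ∫ s : ℝ, hStar n s * F (x - s - t) := by
    have e0 : ∀ u : ℝ, hStar (n + 1) u * F (x - u) =
        ∫ t : ℝ, hTent t * hStar n (u - t) * F (x - u) := by
      intro u
      show (∫ t : ℝ, hTent t * hStar n (u - t)) * F (x - u) = _
      rw [← MeasureTheory.integral_mul_const]
    simp_rw [e0]
    rw [swap_aux (fun u t => hTent t * hStar n (u - t) * F (x - u))
      (((continuous_hTent.comp continuous_snd).mul
        ((continuous_hStar n).comp (continuous_fst.sub continuous_snd))).mul
          (hF.comp (continuous_const.sub continuous_fst))) (tsupport (hStar n) + tsupport hTent) (tsupport hTent)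
      (hAs.isCompact.add hasCompactSupport_hTent.isCompact) hasCompactSupport_hTent ?_]
    · congr 1; funext t
      have e2 : ∀ u : ℝ, hTent t * hStar n (u - t) * F (x - u) =
          hTent t * (hStar n (u - t) * F (x - u)) := fun u => by ring
      simp_rw [e2]
      rw [MeasureTheory.integral_const_mul]
      congr 1
      have e3 := MeasureTheory.integral_add_right_eq_self (μ := (volume : Measure ℝ))
        (fun u : ℝ => hStar n (u - t) * F (x - u)) t
      rw [← e3]
      congr 1; funext s
      simp only [add_sub_cancel_right]
      congr 2
      ring
    · intro u t h
      simp only [ne_eq] at h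
      have ht : hTent t ≠ 0 := fun h' => h (by simp [h'])
      have hu : hStar n (u - t) ≠ 0 := fun h' => h (by simp [h'])
      constructor
      · exact ⟨u - t, subset_closure hu, t, subset_closure ht, by ring⟩
      · exact subset_closure ht
  rw [lhs_eq, rhs_eq]

lemma iteratedDeriv_two_shift (f : ℝ → ℝ) (k : ℕ) :
    iteratedDeriv 2 (iteratedDeriv k f) = iteratedDeriv (2 + k) f := by
  simp only [iteratedDeriv_eq_iterate]
  funext z
  rw [← Function.iterate_add_apply]

lemma contDiff_two_iteratedDeriv (f : ℝ → ℝ) (k : ℕ) (hf : ContDiff ℝ ((2 + k : ℕ)) f) :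
    ContDiff ℝ 2 (iteratedDeriv k f) := by
  have h := ContDiff.iterate_deriv' 2 k hf
  rw [iteratedDeriv_eq_iterate]
  exact_mod_cast h

lemma main_lemma (m : ℕ) : ∀ f : ℝ → ℝ, ContDiff ℝ ((2 * (m + 1) : ℕ)) f → ∀ x : ℝ,
    (deltaOp^[m + 1] f) x = ∫ s : ℝ, hStar m s * iteratedDeriv (2 * (m + 1)) f (x - s) := by
  induction m with
  | zero =>
    intro f hf x
    have h := base_case f (by exact_mod_cast hf) x
    simpa [hStar] using h
  | succ m ih =>
    intro f hf x
    have hle : ((2 * (m + 1) : ℕ) : WithTop ℕ∞) ≤ ((2 * (m + 1 + 1) : ℕ) : WithTop ℕ∞) := by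
      exact_mod_cast (by omega : 2 * (m + 1) ≤ 2 * (m + 1 + 1))
    have hf' : ContDiff ℝ ((2 * (m + 1) : ℕ)) f := hf.of_le hle
    have hG := ih f hf'
    set D := iteratedDeriv (2 * (m + 1)) f with hD
    have hDcont : Continuous D := hf.continuous_iteratedDeriv _ hle
    have hD2 : ContDiff ℝ 2 D :=
      contDiff_two_iteratedDeriv f (2 * (m + 1))
        (by rw [show 2 + 2 * (m + 1) = 2 * (m + 1 + 1) from by ring]; exact hf)
    have hFidx : iteratedDeriv 2 D = iteratedDeriv (2 * (m + 1 + 1)) f := by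
      rw [hD, iteratedDeriv_two_shift, show 2 + 2 * (m + 1) = 2 * (m + 1 + 1) from by ring]
    have hFcont : Continuous (iteratedDeriv (2 * (m + 1 + 1)) f) :=
      hf.continuous_iteratedDeriv _ le_rfl
    have hint : ∀ z : ℝ, Integrable (fun s : ℝ => hStar m s * D (z - s)) := by
      intro z
      apply Continuous.integrable_of_hasCompactSupport
      · exact (continuous_hStar m).mul (hDcont.comp (continuous_const.sub continuous_id))
      · exact (hasCompactSupport_hStar m).mul_right
    have step1 : (deltaOp^[m + 1 + 1] f) x = ∫ s : ℝ, hStar m s * deltaOp D (x - s) := by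
      rw [Function.iterate_succ_apply' deltaOp (m + 1) f]
      show (deltaOp^[m + 1] f) x - (1/2) * (deltaOp^[m + 1] f) (x + 1)
          - (1/2) * (deltaOp^[m + 1] f) (x - 1) = _
      rw [hG x, hG (x + 1), hG (x - 1),
        ← MeasureTheory.integral_const_mul, ← MeasureTheory.integral_const_mul,
        ← integral_sub (hint x) ((hint (x + 1)).const_mul _),
        ← integral_sub (show Integrable (fun s : ℝ => hStar m s * D (x - s)
            - 1/2 * (hStar m s * D (x + 1 - s))) volume from
          (hint x).sub ((hint (x + 1)).const_mul _)) ((hint (x - 1)).const_mul _)]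
      congr 1; funext s
      show hStar m s * D (x - s) - 1/2 * (hStar m s * D (x + 1 - s))
          - 1/2 * (hStar m s * D (x - 1 - s)) = hStar m s * deltaOp D (x - s)
      unfold deltaOp
      rw [show x + 1 - s = x - s + 1 from by ring, show x - 1 - s = x - s - 1 from by ring]
      ring
    have step2 : ∀ z : ℝ, deltaOp D z =
        ∫ t : ℝ, hTent t * iteratedDeriv (2 * (m + 1 + 1)) f (z - t) := by
      intro z
      rw [base_case D hD2 z]
      simp_rw [hFidx]
    rw [step1]
    calc (∫ s : ℝ, hStar m s * deltaOp D (x - s))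
        = ∫ s : ℝ, hStar m s * ∫ t : ℝ, hTent t * iteratedDeriv (2 * (m + 1 + 1)) f (x - s - t) := by
          congr 1; funext s; rw [step2]
      _ = ∫ u : ℝ, hStar (m + 1) u * iteratedDeriv (2 * (m + 1 + 1)) f (x - u) :=
          conv_step _ hFcont m x

theorem stmt11 :
    (∀ n : ℕ, 1 ≤ n → ∀ f : ℝ → ℝ, ContDiff ℝ (2 * n) f → ∀ x : ℝ,
      (deltaOp^[n] f) x = ∫ s : ℝ, hStar (n - 1) s * iteratedDeriv (2 * n) f (x - s)) ∧
    (∀ f : ℝ → ℝ, ContDiff ℝ 2 f → ∀ x : ℝ,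
      deltaOp f x = ∫ s : ℝ, hTent s * iteratedDeriv 2 f (x - s)) := by
  constructor
  · intro n hn f hf x
    obtain ⟨m, rfl⟩ : ∃ m, n = m + 1 := ⟨n - 1, by omega⟩
    have h := main_lemma m f (by exact_mod_cast hf) x
    simpa using h
  · intro f hf x
    exact base_case f hf x
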